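/- Let m and p be positive integers, l = 4mp + 2p + 1 and t = 4mp + 1, so that p' = (2m+1)p. Then for every k with 1 ≤ k ≤ p': σ_{i_k} = 1 if ⌈k/p⌉ is odd, and σ_{i_k} = −1 if ⌈k/p⌉ is even. -/
import Mathlib


/-- `σ_j = (-1)^{⌊(2j-1)t/l⌋}`. -/
def sigmaF (l t j : ℕ) : ℤ := (-1) ^ ((2 * j - 1) * t / l)

/-- `r(j)`: the unique integer with `r(j) ≡ (2j-1)t (mod 2l)` and `-l < r(j) < l`. -/
def rF (l t j : ℕ) : ℤ :=
  if (((2 * j - 1) * t : ℕ) : ℤ) % (2 * l) < l then (((2 * j - 1) * t : ℕ) : ℤ) % (2 * l)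
  else (((2 * j - 1) * t : ℕ) : ℤ) % (2 * l) - 2 * l

/-- `r'(j) = (|r(j)| + 1)/2`. -/
def rpF (l t j : ℕ) : ℤ := (|rF l t j| + 1) / 2

lemma aux_mod (l t j Q R : ℕ) (hN : (2 * j - 1) * t = 2 * l * Q + R) (hR : R < 2 * l) :
    (((2 * j - 1) * t : ℕ) : ℤ) % (2 * (l : ℤ)) = R := by
  have h : ((2 * j - 1) * t) % (2 * l) = R := by
    rw [hN, Nat.mul_add_mod, Nat.mod_eq_of_lt hR]
  have h2 : (((2 * j - 1) * t : ℕ) : ℤ) % ((2 * l : ℕ) : ℤ) = (((2 * j - 1) * t % (2 * l) : ℕ) : ℤ) := by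
    push_cast
    ring
  rw [h] at h2
  rw [← h2]
  norm_cast

lemma aux1 (l t j Q R : ℕ) (hl : 0 < l) (hN : (2 * j - 1) * t = 2 * l * Q + R)
    (hR : R < l) : sigmaF l t j = 1 ∧ rF l t j = R := by
  have hmod := aux_mod l t j Q R hN (by omega)
  constructor
  · have hdiv : (2 * j - 1) * t / l = 2 * Q := by
      have h1 : 2 * l * Q + R = l * (2 * Q) + R := by ring
      rw [hN, h1, Nat.mul_add_div hl, Nat.div_eq_of_lt hR]
      omega
    rw [sigmaF, hdiv, pow_mul]
    norm_num
  · rw [rF, if_pos (by rw [hmod]; exact_mod_cast hR), hmod]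

lemma aux2 (l t j Q R : ℕ) (hl : 0 < l) (hN : (2 * j - 1) * t = 2 * l * Q + R)
    (hR1 : l ≤ R) (hR2 : R < 2 * l) :
    sigmaF l t j = -1 ∧ rF l t j = (R : ℤ) - 2 * l := by
  have hmod := aux_mod l t j Q R hN hR2
  constructor
  · have hdiv : (2 * j - 1) * t / l = 2 * Q + 1 := by
      have h1 : 2 * l * Q + R = l * (2 * Q + 1) + (R - l) := by
        have h2 : l * (2 * Q + 1) = 2 * l * Q + l := by ring
        omega
      rw [hN, h1, Nat.mul_add_div hl, Nat.div_eq_of_lt (by omega)]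
    rw [sigmaF, hdiv, pow_succ, pow_mul]
    norm_num
  · rw [rF, if_neg (by rw [hmod]; omega), hmod]

theorem stmt8 (m p l t p' : ℕ) (hm : 1 ≤ m) (hp : 1 ≤ p)
    (hl : l = 4*m*p + 2*p + 1) (ht : t = 4*m*p + 1) (hp' : p' = (2*m+1)*p)
    (k : ℕ) (hk1 : 1 ≤ k) (hk2 : k ≤ p')
    (j : ℕ) (hj1 : 1 ≤ j) (hj2 : j ≤ p') (hrj : rpF l t j = (k : ℤ)) :
    sigmaF l t j = if ((k + p - 1) / p) % 2 = 1 then 1 else -1 := by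
  subst hl ht hp'
  obtain ⟨c, s, hs, hcj, hcp⟩ : ∃ c s, s ≤ 2 * m ∧ j = (2 * m + 1) * c + s + 1 ∧ c < p := by
    refine ⟨(j - 1) / (2 * m + 1), (j - 1) % (2 * m + 1), ?_, ?_, ?_⟩
    · have := Nat.mod_lt (j - 1) (show 0 < 2 * m + 1 by omega)
      omega
    · have := Nat.div_add_mod (j - 1) (2 * m + 1)
      omega
    · by_contra h
      have h2 : (2 * m + 1) * p ≤ (2 * m + 1) * ((j - 1) / (2 * m + 1)) :=
        Nat.mul_le_mul_left _ (by omega)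
      have h3 := Nat.div_add_mod (j - 1) (2 * m + 1)
      omega
  rcases le_or_gt s m with hsm | hsm
  · -- positive case: σ = 1
    obtain ⟨B, hB⟩ : ∃ B, m = s + B := ⟨m - s, by omega⟩
    subst hB
    have h2j : 2 * j - 1 = 2 * ((2 * (s + B) + 1) * c + s) + 1 := by
      have h4 : 2 * ((2 * (s + B) + 1) * c) = 2 * ((2 * (s + B) + 1) * c) := rfl
      have h5 : 2 * ((2 * (s + B) + 1) * c + s) + 1
          = 2 * ((2 * (s + B) + 1) * c) + 2 * s + 1 := by ring
      omega
    have hN : (2 * j - 1) * (4 * (s + B) * p + 1)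
        = 2 * (4 * (s + B) * p + 2 * p + 1) * (2 * (s + B) * c + s) + (4 * p * B + 2 * c + 1) := by
      rw [h2j]; ring
    have e1 : 4 * (s + B) * p = 4 * (p * s) + 4 * (p * B) := by ring
    have e2 : 4 * p * B = 4 * (p * B) := by ring
    have hR : 4 * p * B + 2 * c + 1 < 4 * (s + B) * p + 2 * p + 1 := by omega
    obtain ⟨hsig, hrF⟩ := aux1 _ _ _ _ _ (by omega) hN hR
    have hk : (k : ℤ) = 2 * (p : ℤ) * B + c + 1 := by
      rw [← hrj, rpF, hrF, abs_of_nonneg (by positivity)]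
      push_cast
      have h6 : (4 * (p : ℤ) * B + 2 * c + 1 + 1) = 2 * (2 * p * B + c + 1) := by ring
      rw [h6, Int.mul_ediv_cancel_left _ two_ne_zero]
    have hkn : k = 2 * (p * B) + c + 1 := by
      have : (k : ℤ) = ((2 * (p * B) + c + 1 : ℕ) : ℤ) := by push_cast; linarith [hk]
      exact_mod_cast this
    have h7 : p * (2 * B + 1) = 2 * (p * B) + p := by ring
    have h8 : k + p - 1 = c + p * (2 * B + 1) := by omega
    have h9 : (k + p - 1) / p = 2 * B + 1 := by
      rw [h8, Nat.add_mul_div_left _ _ (show 0 < p by omega), Nat.div_eq_of_lt hcp]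
      omega
    rw [if_pos (by omega)]
    exact hsig
  · -- negative case: σ = -1
    obtain ⟨D, E, hD, hE⟩ : ∃ D E, m = D + 1 + E ∧ s = 2 * D + E + 2 :=
      ⟨s - m - 1, 2 * m - s, by omega, by omega⟩
    subst hD hE
    have h2j : 2 * j - 1 = 2 * ((2 * (D + 1 + E) + 1) * c + (2 * D + E + 2)) + 1 := by
      have h5 : 2 * ((2 * (D + 1 + E) + 1) * c + (2 * D + E + 2)) + 1
          = 2 * ((2 * (D + 1 + E) + 1) * c) + 2 * (2 * D + E + 2) + 1 := by ring
      omega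
    have hN : (2 * j - 1) * (4 * (D + 1 + E) * p + 1)
        = 2 * (4 * (D + 1 + E) * p + 2 * p + 1) * (2 * (D + 1 + E) * c + 2 * D + E + 1)
          + ((4 * D + 8 * E + 8) * p + 2 * c + 3) := by
      rw [h2j]; ring
    have e1 : 4 * (D + 1 + E) * p = 4 * (p * D) + 4 * (p * E) + 4 * p := by ring
    have e2 : (4 * D + 8 * E + 8) * p = 4 * (p * D) + 8 * (p * E) + 8 * p := by ring
    have hR1 : 4 * (D + 1 + E) * p + 2 * p + 1 ≤ (4 * D + 8 * E + 8) * p + 2 * c + 3 := by omega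
    have hR2 : (4 * D + 8 * E + 8) * p + 2 * c + 3
        < 2 * (4 * (D + 1 + E) * p + 2 * p + 1) := by omega
    obtain ⟨hsig, hrF⟩ := aux2 _ _ _ _ _ (by omega) hN hR1 hR2
    have hk : (k : ℤ) = 2 * (p : ℤ) * (D + 1) - c := by
      rw [← hrj, rpF, hrF]
      have habs : |(((4 * D + 8 * E + 8) * p + 2 * c + 3 : ℕ) : ℤ)
          - 2 * (4 * (D + 1 + E) * p + 2 * p + 1 : ℕ)|
          = 4 * (p : ℤ) * (D + 1) - 2 * c - 1 := by
        have hcast : (((4 * D + 8 * E + 8) * p + 2 * c + 3 : ℕ) : ℤ)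
            ≤ 2 * ((4 * (D + 1 + E) * p + 2 * p + 1 : ℕ) : ℤ) := by exact_mod_cast hR2.le
        rw [abs_of_nonpos (by linarith)]
        push_cast; ring
      rw [habs]
      have h6 : (4 * (p : ℤ) * (D + 1) - 2 * c - 1 + 1) = 2 * (2 * p * (D + 1) - c) := by ring
      rw [h6, Int.mul_ediv_cancel_left _ two_ne_zero]
    have hkn : k + c = 2 * (p * (D + 1)) := by
      have : ((k + c : ℕ) : ℤ) = ((2 * (p * (D + 1)) : ℕ) : ℤ) := by push_cast; linarith [hk]
      exact_mod_cast this
    have h7 : p * (2 * D + 2) = 2 * (p * (D + 1)) := by ring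
    have hcpD : c < 2 * (p * (D + 1)) := by nlinarith
    have h8 : k + p - 1 = (p - 1 - c) + p * (2 * D + 2) := by omega
    have h9 : (k + p - 1) / p = 2 * D + 2 := by
      rw [h8, Nat.add_mul_div_left _ _ (show 0 < p by omega), Nat.div_eq_of_lt (by omega : p - 1 - c < p)]
      omega
    rw [if_neg (by omega)]
    exact hsig
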